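/- Let (X,T) be a TDS. The following are equivalent: (1) (X,T) is mean proximal; (2) (X,T) is mean asymptotic; (3) every (T×T)-invariant Borel probability measure λ on X × X satisfies λ(Δ_X) = 1, where Δ_X = {(x,x) : x ∈ X}; (4) (X,T) is uniquely ergodic and its unique invariant measure is the Dirac measure δ_{x₀} at a fixed point x₀ of T; (5) the product system (X × X, T × T) is mean proximal. -/

import Mathlib

open Filter Metric Set MeasureTheory
open TopologicalSpace BoundedContinuousFunction
open scoped NNReal ENNReal

/-- Birkhoff average of the distance between the orbits of `x` and `y`. -/
noncomputable def birkhoffAvg {X : Type*} [PseudoMetricSpace X]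
    (T : X → X) (x y : X) (N : ℕ) : ℝ :=
  (∑ k ∈ Finset.range N, dist (T^[k] x) (T^[k] y)) / N

/-- A pair `(x,y)` is mean proximal if
`liminf_{N→∞} (1/N) ∑_{k<N} d(T^k x, T^k y) = 0`. -/
def MeanProximalPair {X : Type*} [PseudoMetricSpace X] (T : X → X) (x y : X) : Prop :=
  liminf (birkhoffAvg T x y) atTop = 0

lemma prodMap_iterate {X : Type*} (T : X → X) (k : ℕ) (p : X × X) :
    (Prod.map T T)^[k] p = (T^[k] p.1, T^[k] p.2) := by
  induction k generalizing p with
  | zero => simp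
  | succ n ih => rw [Function.iterate_succ_apply, ih]; simp

lemma birkhoffAvg_nonneg {X : Type*} [PseudoMetricSpace X] (T : X → X) (x y : X) (N : ℕ) :
    0 ≤ birkhoffAvg T x y N := by
  unfold birkhoffAvg
  positivity

lemma birkhoffAvg_prod {X : Type*} [PseudoMetricSpace X] (T : X → X) (x y : X) :
    birkhoffAvg (Prod.map T T) (x, x) (y, y) = birkhoffAvg T x y := by
  funext N
  unfold birkhoffAvg
  congr 1
  refine Finset.sum_congr rfl fun k _ => ?_
  rw [prodMap_iterate, prodMap_iterate]
  simp [Prod.dist_eq]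

/-- (5) → (1) -/
lemma mp_of_prod_mp {X : Type*} [PseudoMetricSpace X] (T : X → X)
    (h : ∀ u v : X × X, MeanProximalPair (Prod.map T T) u v) (x y : X) :
    MeanProximalPair T x y := by
  have := h (x, x) (y, y)
  unfold MeanProximalPair at *
  rwa [birkhoffAvg_prod] at this

/-- (2) → (5) -/
lemma prod_tendsto_of_tendsto {X : Type*} [PseudoMetricSpace X] (T : X → X)
    (h : ∀ x y : X, Tendsto (birkhoffAvg T x y) atTop (nhds 0)) (u v : X × X) :
    Tendsto (birkhoffAvg (Prod.map T T) u v) atTop (nhds 0) := by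
  have hb : ∀ N, birkhoffAvg (Prod.map T T) u v N ≤
      birkhoffAvg T u.1 v.1 N + birkhoffAvg T u.2 v.2 N := by
    intro N
    unfold birkhoffAvg
    rw [← add_div]
    rcases Nat.eq_zero_or_pos N with h0 | h0
    · simp [h0]
    rw [div_le_div_iff_of_pos_right (by exact_mod_cast h0)]
    rw [← Finset.sum_add_distrib]
    refine Finset.sum_le_sum fun k _ => ?_
    rw [prodMap_iterate, prodMap_iterate]
    rw [Prod.dist_eq]
    exact max_le_add_of_nonneg dist_nonneg dist_nonneg
  exact squeeze_zero (birkhoffAvg_nonneg _ _ _) hb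
    (by simpa using (h u.1 v.1).add (h u.2 v.2))

/-- Block decomposition bound: if from every point some initial Birkhoff sum of length
`≤ M` is `≤ ε * N`, then every Birkhoff sum of length `L` is `≤ ε * L + M * D`. -/
lemma block_bound {Y : Type*} (S : Y → Y) (f : Y → ℝ) (D ε : ℝ) (hε : 0 ≤ ε)
    (hf0 : ∀ z, 0 ≤ f z) (hfD : ∀ z, f z ≤ D) (M : ℕ)
    (hM : ∀ q : Y, ∃ N, 1 ≤ N ∧ N ≤ M ∧ ∑ k ∈ Finset.range N, f (S^[k] q) ≤ ε * N) :
    ∀ L, ∀ q : Y, ∑ k ∈ Finset.range L, f (S^[k] q) ≤ ε * L + M * D := by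
  intro L
  induction L using Nat.strong_induction_on with
  | _ L ih =>
    intro q
    have hD : 0 ≤ D := le_trans (hf0 q) (hfD q)
    obtain ⟨N, hN1, hNM, hsum⟩ := hM q
    rcases le_or_gt L M with hLM | hLM
    · calc ∑ k ∈ Finset.range L, f (S^[k] q) ≤ ∑ k ∈ Finset.range L, D :=
            Finset.sum_le_sum fun k _ => hfD _
        _ = L * D := by rw [Finset.sum_const, Finset.card_range]; ring
        _ ≤ ε * L + M * D := by
            have : (L : ℝ) ≤ M := by exact_mod_cast hLM
            nlinarith [mul_nonneg hε (Nat.cast_nonneg (α := ℝ) L)]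
    · have hNL : N ≤ L := hNM.trans hLM.le
      have hsplit : ∑ k ∈ Finset.range L, f (S^[k] q)
          = ∑ k ∈ Finset.range N, f (S^[k] q)
            + ∑ k ∈ Finset.range (L - N), f (S^[k] (S^[N] q)) := by
        have hLN : L = N + (L - N) := by omega
        conv_lhs => rw [hLN, Finset.sum_range_add]
        congr 1
        refine Finset.sum_congr rfl fun k _ => ?_
        rw [add_comm N k, Function.iterate_add_apply]
      rw [hsplit]
      have hih := ih (L - N) (by omega) (S^[N] q)
      have : (↑(L - N) : ℝ) = (L : ℝ) - N := by
        rw [Nat.cast_sub hNL]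
      nlinarith [hsum, hih]

lemma birkhoffAvg_le_of_dist_le {X : Type*} [PseudoMetricSpace X] (T : X → X) {C : ℝ}
    (hC : ∀ a b : X, dist a b ≤ C) (hC0 : 0 ≤ C) (x y : X) (N : ℕ) :
    birkhoffAvg T x y N ≤ C := by
  rcases Nat.eq_zero_or_pos N with h0 | h0
  · simpa [birkhoffAvg, h0] using hC0
  unfold birkhoffAvg
  rw [div_le_iff₀ (by exact_mod_cast h0)]
  calc ∑ k ∈ Finset.range N, dist (T^[k] x) (T^[k] y) ≤ ∑ _k ∈ Finset.range N, C :=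
        Finset.sum_le_sum fun k _ => hC _ _
    _ = C * N := by rw [Finset.sum_const, Finset.card_range]; ring

/-- (1) → (2) -/
lemma tendsto_birkhoff_of_mp {X : Type*} [MetricSpace X] [CompactSpace X]
    (T : X → X) (hT : Continuous T)
    (h1 : ∀ x y : X, MeanProximalPair T x y) (x y : X) :
    Tendsto (birkhoffAvg T x y) atTop (nhds 0) := by
  obtain ⟨C, hC⟩ : ∃ C, ∀ a b : X, dist a b ≤ C := by
    obtain ⟨C, hC⟩ := Metric.isBounded_iff.1 (isCompact_univ (X := X)).isBounded
    exact ⟨C, fun a b => hC (mem_univ a) (mem_univ b)⟩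
  have hC0 : 0 ≤ C := le_trans dist_nonneg (hC x x)
  have hsum : ∀ (q : X × X) (N : ℕ),
      ∑ k ∈ Finset.range N, dist ((Prod.map T T)^[k] q).1 ((Prod.map T T)^[k] q).2
        = ∑ k ∈ Finset.range N, dist (T^[k] q.1) (T^[k] q.2) :=
    fun q N => Finset.sum_congr rfl fun k _ => by rw [prodMap_iterate]
  have main : ∀ ε : ℝ, 0 < ε → ∃ M : ℕ, ∀ q : X × X, ∃ N, 1 ≤ N ∧ N ≤ M ∧
      ∑ k ∈ Finset.range N, dist ((Prod.map T T)^[k] q).1 ((Prod.map T T)^[k] q).2 ≤ ε * N := by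
    intro ε hε
    set U : ℕ → Set (X × X) := fun N =>
      {q | ∑ k ∈ Finset.range N, dist ((Prod.map T T)^[k] q).1 ((Prod.map T T)^[k] q).2 < ε * N}
      with hU
    have hUopen : ∀ N, IsOpen (U N) := by
      intro N
      apply isOpen_lt _ continuous_const
      exact continuous_finset_sum _ fun k _ =>
        continuous_dist.comp (((hT.prodMap hT).iterate k))
    have hcover : (univ : Set (X × X)) ⊆ ⋃ N, U N := by
      intro q _
      have hlm := h1 q.1 q.2
      have hbdd : IsBoundedUnder (· ≤ ·) atTop (birkhoffAvg T q.1 q.2) :=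
        isBoundedUnder_of ⟨C, fun (N : ℕ) => birkhoffAvg_le_of_dist_le T hC hC0 q.1 q.2 N⟩
      have hfreq : ∃ᶠ N in atTop, birkhoffAvg T q.1 q.2 N < ε := by
        apply frequently_lt_of_liminf_lt hbdd.isCoboundedUnder_ge
        rw [hlm]; exact hε
      obtain ⟨N, hNε, hN1⟩ := (hfreq.and_eventually (eventually_ge_atTop 1)).exists
      refine mem_iUnion.2 ⟨N, ?_⟩
      have hNpos : (0:ℝ) < N := by exact_mod_cast hN1
      rw [hU]
      simp only [mem_setOf_eq]
      rw [hsum]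
      unfold birkhoffAvg at hNε
      rw [div_lt_iff₀ hNpos] at hNε
      linarith
    obtain ⟨t, ht⟩ := isCompact_univ.elim_finite_subcover U hUopen hcover
    refine ⟨t.sup id, fun q => ?_⟩
    obtain ⟨N, hNt, hq⟩ := mem_iUnion₂.1 (ht (mem_univ q))
    have hN1 : 1 ≤ N := by
      rcases Nat.eq_zero_or_pos N with h0 | h0
      · exfalso; rw [hU] at hq; simp [h0] at hq
      · exact h0
    exact ⟨N, hN1, Finset.le_sup (f := id) hNt, le_of_lt hq⟩
  rw [Metric.tendsto_atTop]
  intro ε hε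
  obtain ⟨M, hM⟩ := main (ε/4) (by linarith)
  have hblock := block_bound (Prod.map T T)
    (fun q => dist q.1 q.2) C (ε/4) (by linarith)
    (fun z => dist_nonneg) (fun z => hC _ _) M hM
  have hdiv : Tendsto (fun L : ℕ => (M : ℝ) * C / L) atTop (nhds 0) :=
    tendsto_const_div_atTop_nhds_zero_nat _
  obtain ⟨L₀, hL₀⟩ := (Metric.tendsto_atTop.1 hdiv) (ε/4) (by linarith)
  refine ⟨max L₀ 1, fun L hL => ?_⟩
  have hL1 : 1 ≤ L := le_trans (le_max_right _ _) hL
  have hLpos : (0:ℝ) < L := by exact_mod_cast hL1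
  have hb := hblock L (x, y)
  rw [hsum] at hb
  have havg : birkhoffAvg T x y L ≤ ε/4 + M * C / L := by
    unfold birkhoffAvg
    rw [div_le_iff₀ hLpos]
    calc (∑ k ∈ Finset.range L, dist (T^[k] x) (T^[k] y)) ≤ ε/4 * L + M * C := hb
      _ = (ε/4 + M * C / L) * L := by field_simp
  have hdivL : (M:ℝ) * C / L < ε/4 := by
    have := hL₀ L (le_trans (le_max_left _ _) hL)
    rw [Real.dist_eq, sub_zero] at this
    calc (M:ℝ) * C / L ≤ |(M:ℝ) * C / L| := le_abs_self _
      _ < ε/4 := this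
  rw [Real.dist_eq, sub_zero, abs_of_nonneg (birkhoffAvg_nonneg T x y L)]
  linarith

/-- Mean asymptoticity gives a fixed point. -/
lemma exists_fixedPt {X : Type*} [MetricSpace X] [CompactSpace X] [Nonempty X]
    (T : X → X) (hT : Continuous T)
    (h2 : ∀ x y : X, Tendsto (birkhoffAvg T x y) atTop (nhds 0)) :
    ∃ x₀ : X, T x₀ = x₀ := by
  obtain ⟨x⟩ := ‹Nonempty X›
  set d : ℕ → ℝ := fun k => dist (T^[k] x) (T^[k] (T x)) with hd
  have hcomm : ∀ k, T^[k] (T x) = T (T^[k] x) := fun k => by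
    rw [← Function.iterate_succ_apply, Function.iterate_succ_apply']
  have hfreq : ∀ ε : ℝ, 0 < ε → ∃ᶠ k in atTop, d k < ε := by
    intro ε hε
    by_contra hcon
    rw [not_frequently] at hcon
    simp only [not_lt] at hcon
    obtain ⟨K, hK⟩ := eventually_atTop.1 hcon
    have hbound : ∀ᶠ N in atTop, ε - ε * K / N ≤ birkhoffAvg T x (T x) N := by
      filter_upwards [eventually_ge_atTop (K + 1)] with N hN
      have hNpos : (0:ℝ) < N := by
        have : 1 ≤ N := le_trans (Nat.le_add_left 1 K) hN
        exact_mod_cast this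
      have hsub : Finset.Ico K N ⊆ Finset.range N := by
        rw [Finset.range_eq_Ico]
        exact Finset.Ico_subset_Ico (Nat.zero_le K) le_rfl
      have hsum : ((N:ℝ) - K) * ε ≤ ∑ k ∈ Finset.range N, d k := by
        calc ((N:ℝ) - K) * ε = ∑ _k ∈ Finset.Ico K N, ε := by
              rw [Finset.sum_const, Nat.card_Ico, nsmul_eq_mul, Nat.cast_sub (by omega)]
          _ ≤ ∑ k ∈ Finset.Ico K N, d k := Finset.sum_le_sum fun k hk =>
              hK k (Finset.mem_Ico.1 hk).1
          _ ≤ ∑ k ∈ Finset.range N, d k :=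
              Finset.sum_le_sum_of_subset_of_nonneg hsub fun k _ _ => dist_nonneg
      have heq : ε - ε * K / N = ((N:ℝ) - K) * ε / N := by
        field_simp
      rw [heq]
      unfold birkhoffAvg
      gcongr
    have hlim1 : Tendsto (fun N : ℕ => ε - ε * K / N) atTop (nhds ε) := by
      have := tendsto_const_nhds (x := ε) (f := atTop (α := ℕ)) |>.sub
        (tendsto_const_div_atTop_nhds_zero_nat (ε * K))
      simpa using this
    have := le_of_tendsto_of_tendsto hlim1 (h2 x (T x)) hbound
    linarith
  have hsel : ∀ j : ℕ, ∃ k, d k < 1 / (j + 1) := fun j =>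
    (hfreq (1 / (j + 1)) (by positivity)).exists
  choose ks hks using hsel
  obtain ⟨z, -, φ, hφ, hz⟩ := isCompact_univ.tendsto_subseq
    (fun j => mem_univ (T^[ks j] x))
  have hF : Continuous fun w => dist w (T w) := continuous_id.dist hT
  have hA : Tendsto (fun i => dist (T^[ks (φ i)] x) (T (T^[ks (φ i)] x))) atTop
      (nhds (dist z (T z))) := (hF.tendsto z).comp hz
  have hB : Tendsto (fun i => dist (T^[ks (φ i)] x) (T (T^[ks (φ i)] x))) atTop (nhds 0) := by
    apply squeeze_zero (fun i => dist_nonneg) (g := fun i : ℕ => 1 / (i + 1))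
    · intro i
      have h1 := hks (φ i)
      rw [hd] at h1
      simp only at h1
      rw [hcomm] at h1
      refine le_trans h1.le ?_
      have hle : (i:ℝ) + 1 ≤ (φ i) + 1 := by
        have h2 : i ≤ φ i := hφ.le_apply
        have : (i:ℝ) ≤ φ i := by exact_mod_cast h2
        linarith
      exact one_div_le_one_div_of_le (by positivity) hle
    · exact tendsto_one_div_add_atTop_nhds_zero_nat
  have : dist z (T z) = 0 := tendsto_nhds_unique hA hB
  exact ⟨z, (dist_eq_zero.1 this).symm⟩

lemma ennreal_avg_le {a : ℕ → ℝ≥0∞} {C : ℝ≥0∞} (h : ∀ k, a k ≤ C) (N : ℕ) :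
    (∑ k ∈ Finset.range N, a k) / N ≤ C := by
  apply ENNReal.div_le_of_le_mul
  calc ∑ k ∈ Finset.range N, a k ≤ ∑ _k ∈ Finset.range N, C :=
        Finset.sum_le_sum fun k _ => h k
    _ = C * N := by rw [Finset.sum_const, Finset.card_range, nsmul_eq_mul, mul_comm]

lemma map_iterate_eq {X : Type*} [MeasurableSpace X] {T : X → X} (hT : Measurable T)
    {μ : Measure X} (hmap : Measure.map T μ = μ) (k : ℕ) :
    Measure.map (T^[k]) μ = μ := by
  induction k with
  | zero => simp
  | succ n ih =>
    rw [Function.iterate_succ, ← Measure.map_map (hT.iterate n) hT, hmap, ih]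

/-- uniqueness of the invariant measure under mean asymptoticity with fixed point `x₀`. -/
lemma invariant_eq_dirac {X : Type*} [MetricSpace X] [CompactSpace X]
    [MeasurableSpace X] [BorelSpace X] (T : X → X) (hT : Continuous T) {x₀ : X}
    (hx₀ : T x₀ = x₀)
    (h2 : ∀ x y : X, Tendsto (birkhoffAvg T x y) atTop (nhds 0))
    (μ : Measure X) (hp : IsProbabilityMeasure μ)
    (hinv : ∀ B : Set X, MeasurableSet B → μ (T ⁻¹' B) = μ B) :
    μ = Measure.dirac x₀ := by
  have hmap : Measure.map T μ = μ :=
    Measure.ext fun B hB => by rw [Measure.map_apply hT.measurable hB, hinv B hB]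
  set g : X → ℝ≥0∞ := fun z => edist z x₀ with hg
  have hgm : Measurable g := (continuous_id.edist continuous_const).measurable
  obtain ⟨C, hCtop, hCg⟩ : ∃ C : ℝ≥0∞, C ≠ ∞ ∧ ∀ z, g z ≤ C := by
    refine ⟨EMetric.diam (univ : Set X), ?_, fun z =>
      EMetric.edist_le_diam_of_mem (mem_univ z) (mem_univ x₀)⟩
    exact (isCompact_univ.isBounded).ediam_ne_top
  set G : ℕ → X → ℝ≥0∞ := fun N z => (∑ k ∈ Finset.range N, g (T^[k] z)) / N with hG
  have hGm : ∀ N, Measurable (G N) := by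
    intro N
    apply Measurable.div_const
    exact Finset.measurable_sum _ fun k _ => hgm.comp ((hT.measurable).iterate k)
  have hGint : ∀ N : ℕ, 1 ≤ N → ∫⁻ z, G N z ∂μ = ∫⁻ z, g z ∂μ := by
    intro N hN
    have hterm : ∀ k, ∫⁻ z, g (T^[k] z) ∂μ = ∫⁻ z, g z ∂μ := by
      intro k
      rw [← lintegral_map hgm (hT.measurable.iterate k),
        map_iterate_eq hT.measurable hmap k]
    calc ∫⁻ z, G N z ∂μ
        = (∫⁻ z, ∑ k ∈ Finset.range N, g (T^[k] z) ∂μ) * (↑N)⁻¹ := by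
          simp only [hG, div_eq_mul_inv]
          rw [lintegral_mul_const _ (show Measurable fun z => ∑ k ∈ Finset.range N, g (T^[k] z)
            from Finset.measurable_sum _ fun k _ => hgm.comp ((hT.measurable).iterate k))]
      _ = (∑ k ∈ Finset.range N, ∫⁻ z, g (T^[k] z) ∂μ) * (↑N)⁻¹ := by
          rw [lintegral_finset_sum _ fun k _ => (show Measurable fun z => g (T^[k] z)
            from hgm.comp ((hT.measurable).iterate k))]
      _ = ((N : ℝ≥0∞) * ∫⁻ z, g z ∂μ) * (↑N)⁻¹ := by
          rw [Finset.sum_congr rfl fun k _ => hterm k, Finset.sum_const,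
            Finset.card_range, nsmul_eq_mul]
      _ = ∫⁻ z, g z ∂μ := by
          rw [mul_comm (N : ℝ≥0∞), mul_assoc, ENNReal.mul_inv_cancel
            (by
              simp only [ne_eq, Nat.cast_eq_zero]
              omega) (ENNReal.natCast_ne_top N), mul_one]
  have hpt : ∀ z, Tendsto (fun N => G N z) atTop (nhds 0) := by
    intro z
    have hb := h2 z x₀
    have heq : ∀ N : ℕ, 1 ≤ N → G N z = ENNReal.ofReal (birkhoffAvg T z x₀ N) := by
      intro N hN
      have hNpos : (0:ℝ) < N := by exact_mod_cast hN
      unfold birkhoffAvg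
      simp only [hG]
      rw [ENNReal.ofReal_div_of_pos hNpos, ENNReal.ofReal_sum_of_nonneg
        (fun k _ => dist_nonneg), ENNReal.ofReal_natCast]
      congr 1
      refine Finset.sum_congr rfl fun k _ => ?_
      rw [Function.iterate_fixed hx₀, ← edist_dist]
    have : Tendsto (fun N => ENNReal.ofReal (birkhoffAvg T z x₀ N)) atTop (nhds 0) := by
      have := (ENNReal.continuous_ofReal.tendsto 0).comp hb
      simpa [Function.comp_def] using this
    refine Tendsto.congr' ?_ this
    filter_upwards [eventually_ge_atTop 1] with N hN
    exact (heq N hN).symm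
  have hdct : Tendsto (fun N => ∫⁻ z, G N z ∂μ) atTop (nhds (∫⁻ _z, (0:ℝ≥0∞) ∂μ)) := by
    refine tendsto_lintegral_of_dominated_convergence (fun _ => C) hGm ?_ ?_ ?_
    · intro N
      exact Filter.Eventually.of_forall fun z => ennreal_avg_le (fun k => hCg _) N
    · rw [lintegral_const]
      exact ENNReal.mul_ne_top hCtop (by simp)
    · exact Filter.Eventually.of_forall hpt
  have hzero : ∫⁻ z, g z ∂μ = 0 := by
    have hconst : Tendsto (fun N => ∫⁻ z, G N z ∂μ) atTop (nhds (∫⁻ z, g z ∂μ)) := by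
      refine Tendsto.congr' ?_ tendsto_const_nhds
      filter_upwards [eventually_ge_atTop 1] with N hN
      exact (hGint N hN).symm
    have := tendsto_nhds_unique hconst hdct
    simpa using this
  have hae : μ {z | z ≠ x₀} = 0 := by
    have h0 := (lintegral_eq_zero_iff hgm).1 hzero
    have : {z | z ≠ x₀} ⊆ {z | g z ≠ 0} := by
      intro z hz
      simp only [mem_setOf_eq, hg, ne_eq, edist_eq_zero]
      exact hz
    refine measure_mono_null this ?_
    simpa [Filter.EventuallyEq, ae_iff] using h0
  have hx₀1 : μ {x₀} = 1 := by
    have hcompl : ({x₀}ᶜ : Set X) = {z | z ≠ x₀} := by ext z; simp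
    have := measure_add_measure_compl (μ := μ) (measurableSet_singleton x₀)
    rw [hcompl, hae, add_zero] at this
    simpa using this
  refine Measure.ext fun B hB => ?_
  rw [Measure.dirac_apply' x₀ hB]
  by_cases hmem : x₀ ∈ B
  · have h1 : (1:ℝ≥0∞) = μ {x₀} := hx₀1.symm
    have hle : μ {x₀} ≤ μ B := measure_mono (singleton_subset_iff.2 hmem)
    have hub : μ B ≤ 1 := prob_le_one
    simp only [indicator_of_mem hmem, Pi.one_apply]
    rw [hx₀1] at hle
    exact le_antisymm hub hle
  · have : B ⊆ {z | z ≠ x₀} := fun z hz => by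
      simp only [mem_setOf_eq]
      rintro rfl
      exact hmem hz
    rw [indicator_of_notMem hmem]
    exact measure_mono_null this hae

/-- (4) → (3): marginals of an invariant measure on the product are invariant, hence Dirac. -/
lemma diag_of_unique {X : Type*} [MetricSpace X] [CompactSpace X]
    [MeasurableSpace X] [BorelSpace X] (T : X → X) (hT : Continuous T) (x₀ : X)
    (huniq : ∀ μ : Measure X, IsProbabilityMeasure μ →
      (∀ B : Set X, MeasurableSet B → μ (T ⁻¹' B) = μ B) → μ = Measure.dirac x₀)
    (ν : Measure (X × X)) (hν : IsProbabilityMeasure ν)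
    (hinv : ∀ B : Set (X × X), MeasurableSet B → ν (Prod.map T T ⁻¹' B) = ν B) :
    ν (Set.diagonal X) = 1 := by
  have key : ∀ π : X × X → X, Measurable π → (∀ p : X × X, π (Prod.map T T p) = T (π p)) →
      ν (π ⁻¹' {x₀}) = 1 := by
    intro π hπ hcomm
    set μ₁ := ν.map π with hμ₁
    have hprob : IsProbabilityMeasure μ₁ := Measure.isProbabilityMeasure_map hπ.aemeasurable
    have hinv₁ : ∀ B : Set X, MeasurableSet B → μ₁ (T ⁻¹' B) = μ₁ B := by
      intro B hB
      rw [hμ₁, Measure.map_apply hπ (hT.measurable hB), Measure.map_apply hπ hB]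
      have hset : π ⁻¹' (T ⁻¹' B) = Prod.map T T ⁻¹' (π ⁻¹' B) := by
        ext p
        simp [hcomm p]
      rw [hset, hinv _ (hπ hB)]
    have h1 : μ₁ = Measure.dirac x₀ := huniq μ₁ hprob hinv₁
    have h2 : ν (π ⁻¹' {x₀}) = μ₁ {x₀} :=
      (Measure.map_apply hπ (measurableSet_singleton x₀)).symm
    rw [h2, h1, Measure.dirac_apply' _ (measurableSet_singleton x₀)]
    simp
  have hA : ν (Prod.fst ⁻¹' {x₀}) = 1 := key Prod.fst measurable_fst fun p => rfl
  have hB : ν (Prod.snd ⁻¹' {x₀}) = 1 := key Prod.snd measurable_snd fun p => rfl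
  have hAm : MeasurableSet (Prod.fst ⁻¹' {x₀} : Set (X × X)) :=
    measurable_fst (measurableSet_singleton x₀)
  have hBm : MeasurableSet (Prod.snd ⁻¹' {x₀} : Set (X × X)) :=
    measurable_snd (measurableSet_singleton x₀)
  have hAc : ν (Prod.fst ⁻¹' {x₀})ᶜ = 0 := by
    rw [measure_compl hAm (measure_ne_top ν _), hA, measure_univ, tsub_self]
  have hBc : ν (Prod.snd ⁻¹' {x₀})ᶜ = 0 := by
    rw [measure_compl hBm (measure_ne_top ν _), hB, measure_univ, tsub_self]
  have hint : ν (Prod.fst ⁻¹' {x₀} ∩ Prod.snd ⁻¹' {x₀}) = 1 := by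
    have hcup : ν ((Prod.fst ⁻¹' {x₀} ∩ Prod.snd ⁻¹' {x₀})ᶜ) = 0 := by
      rw [Set.compl_inter]
      refine le_antisymm ((measure_union_le _ _).trans ?_) (zero_le)
      rw [hAc, hBc, add_zero]
    have h3 := measure_add_measure_compl (μ := ν) (hAm.inter hBm)
    rw [hcup, add_zero, measure_univ] at h3
    exact h3
  refine le_antisymm prob_le_one ?_
  calc (1:ℝ≥0∞) = ν (Prod.fst ⁻¹' {x₀} ∩ Prod.snd ⁻¹' {x₀}) := hint.symm
    _ ≤ ν (Set.diagonal X) := by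
        refine measure_mono fun p hp => ?_
        rcases hp with ⟨h1, h2⟩
        simp only [mem_preimage, mem_singleton_iff] at h1 h2
        rw [Set.mem_diagonal_iff, h1, h2]

section KB

variable {Y : Type*} [MetricSpace Y] [CompactSpace Y] [Nonempty Y]
  [MeasurableSpace Y] [BorelSpace Y]

/-- Krylov–Bogolyubov-type construction. -/
lemma exists_invariant_of_freq (S : Y → Y) (hS : Continuous S) (y : Y)
    (f₀ : Y →ᵇ ℝ≥0) (c : ℝ≥0) (hc : 0 < c)
    (hfreq : ∃ᶠ N in atTop,
      (c : ℝ≥0∞) ≤ (∑ k ∈ Finset.range N, (f₀ (S^[k] y) : ℝ≥0∞)) / N) :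
    ∃ μ : Measure Y, IsProbabilityMeasure μ ∧
      (∀ B : Set Y, MeasurableSet B → μ (S ⁻¹' B) = μ B) ∧
      μ {z | c / 2 ≤ f₀ z} ≠ 0 := by
  classical
  set A : ℕ → (Y →ᵇ ℝ≥0) → ℝ≥0∞ :=
    fun N f => (∑ k ∈ Finset.range N, (f (S^[k] y) : ℝ≥0∞)) / N with hA
  have hne : NeBot (atTop ⊓ Filter.principal {N : ℕ | (c : ℝ≥0∞) ≤ A N f₀}) :=
    frequently_iff_neBot.1 hfreq
  set u : Ultrafilter ℕ := @Ultrafilter.of _ (atTop ⊓ Filter.principal _) hne with hu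
  have hu_le : (u : Filter ℕ) ≤ atTop ⊓ Filter.principal {N : ℕ | (c : ℝ≥0∞) ≤ A N f₀} :=
    Ultrafilter.of_le _
  have hu_atTop : (u : Filter ℕ) ≤ atTop := hu_le.trans inf_le_left
  have hu_mem : ∀ᶠ N in (u : Filter ℕ), (c : ℝ≥0∞) ≤ A N f₀ :=
    (hu_le.trans inf_le_right) (Filter.mem_principal_self _)
  set limA : (Y →ᵇ ℝ≥0) → ℝ≥0∞ := fun f => (u.map (fun N => A N f)).lim with hlimA
  have htend : ∀ f, Tendsto (fun N => A N f) u (nhds (limA f)) := by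
    intro f
    have := (u.map (fun N => A N f)).le_nhds_lim
    rwa [Ultrafilter.coe_map] at this
  have hbound : ∀ f : Y →ᵇ ℝ≥0, ∃ C : ℝ≥0, (∀ z, f z ≤ C) ∧ limA f ≤ C := by
    intro f
    obtain ⟨z₀, -, hz₀⟩ := isCompact_univ.exists_isMaxOn ⟨y, mem_univ y⟩
      f.continuous.continuousOn
    refine ⟨f z₀, fun z => hz₀ (mem_univ z), ?_⟩
    refine le_of_tendsto (htend f) (Filter.Eventually.of_forall fun N => ?_)
    exact ennreal_avg_le (fun k => ENNReal.coe_le_coe.2 (hz₀ (mem_univ _))) N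
  have hfin : ∀ f, limA f ≠ ∞ := fun f => by
    obtain ⟨C, -, hC⟩ := hbound f
    exact (hC.trans_lt ENNReal.coe_lt_top).ne
  have hadd : ∀ f g, limA (f + g) = limA f + limA g := by
    intro f g
    refine tendsto_nhds_unique (htend (f + g)) (((htend f).add (htend g)).congr fun N => ?_)
    rw [hA]
    simp only
    rw [← ENNReal.add_div, ← Finset.sum_add_distrib]
    first
    | (congr 1; done)
    | (congr 1
       exact Finset.sum_congr rfl fun k _ => by
         rw [BoundedContinuousFunction.add_apply, ENNReal.coe_add])
  have hsmul : ∀ (r : ℝ≥0) (f : Y →ᵇ ℝ≥0), limA (r • f) = r * limA f := by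
    intro r f
    refine tendsto_nhds_unique (htend (r • f))
      ((ENNReal.Tendsto.const_mul (htend f) (Or.inr ENNReal.coe_ne_top)).congr fun N => ?_)
    rw [hA]
    simp only [div_eq_mul_inv, ← mul_assoc]
    congr 1
    rw [Finset.mul_sum]
    refine Finset.sum_congr rfl fun k _ => ?_
    simp [smul_eq_mul, ENNReal.coe_mul]
  have hmono : ∀ f g : Y →ᵇ ℝ≥0, (∀ z, f z ≤ g z) → limA f ≤ limA g := by
    intro f g hfg
    refine le_of_tendsto_of_tendsto (htend f) (htend g)
      (Filter.Eventually.of_forall fun N => ?_)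
    exact ENNReal.div_le_div_right
      (Finset.sum_le_sum fun k _ => ENNReal.coe_le_coe.2 (hfg _)) _
  have hone : limA 1 = 1 := by
    refine tendsto_nhds_unique (htend 1) (Tendsto.congr' ?_ tendsto_const_nhds)
    filter_upwards [hu_atTop (eventually_ge_atTop 1)] with N hN
    rw [hA]
    simp only [BoundedContinuousFunction.coe_one, Pi.one_apply, ENNReal.coe_one,
      Finset.sum_const, Finset.card_range, nsmul_eq_mul, mul_one]
    rw [ENNReal.div_self (by exact_mod_cast Nat.one_le_iff_ne_zero.1 hN)
      (ENNReal.natCast_ne_top N)]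
  have hCdiv : ∀ C : ℝ≥0, Tendsto (fun N : ℕ => (C : ℝ≥0∞) / N) atTop (nhds 0) := by
    intro C
    have := ENNReal.Tendsto.const_mul (ENNReal.tendsto_inv_nat_nhds_zero)
      (Or.inr (ENNReal.coe_ne_top (r := C)))
    simpa [div_eq_mul_inv] using this
  have hinvlim : ∀ f : Y →ᵇ ℝ≥0, limA (f.compContinuous ⟨S, hS⟩) = limA f := by
    intro f
    obtain ⟨C, hCf, -⟩ := hbound f
    set F := f.compContinuous ⟨S, hS⟩ with hF
    have hFk : ∀ k, (F (S^[k] y) : ℝ≥0∞) = (f (S^[k+1] y) : ℝ≥0∞) := fun k => by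
      rw [hF, BoundedContinuousFunction.compContinuous_apply]
      simp only [ContinuousMap.coe_mk]
      rw [← Function.iterate_succ_apply' S k y]
    have hkey1 : ∀ N, A N F ≤ A N f + (C : ℝ≥0∞) / N := by
      intro N
      rw [← ENNReal.add_div]
      refine ENNReal.div_le_div_right ?_ _
      calc ∑ k ∈ Finset.range N, (F (S^[k] y) : ℝ≥0∞)
          = ∑ k ∈ Finset.range N, (f (S^[k+1] y) : ℝ≥0∞) :=
            Finset.sum_congr rfl fun k _ => hFk k
        _ ≤ ∑ k ∈ Finset.range (N + 1), (f (S^[k] y) : ℝ≥0∞) := by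
            rw [Finset.sum_range_succ']
            exact le_add_right le_rfl
        _ = ∑ k ∈ Finset.range N, (f (S^[k] y) : ℝ≥0∞) + (f (S^[N] y) : ℝ≥0∞) :=
            Finset.sum_range_succ _ _
        _ ≤ ∑ k ∈ Finset.range N, (f (S^[k] y) : ℝ≥0∞) + C := by
            exact add_le_add le_rfl (ENNReal.coe_le_coe.2 (hCf _))
    have hkey2 : ∀ N, A N f ≤ A N F + (C : ℝ≥0∞) / N := by
      intro N
      rw [← ENNReal.add_div]
      refine ENNReal.div_le_div_right ?_ _
      calc ∑ k ∈ Finset.range N, (f (S^[k] y) : ℝ≥0∞)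
          ≤ ∑ k ∈ Finset.range (N + 1), (f (S^[k] y) : ℝ≥0∞) := by
            rw [Finset.sum_range_succ]
            exact le_add_right le_rfl
        _ = ∑ k ∈ Finset.range N, (f (S^[k+1] y) : ℝ≥0∞) + (f (S^[0] y) : ℝ≥0∞) :=
            Finset.sum_range_succ' _ _
        _ ≤ ∑ k ∈ Finset.range N, (F (S^[k] y) : ℝ≥0∞) + C := by
            refine add_le_add (le_of_eq (Finset.sum_congr rfl fun k _ => (hFk k).symm)) ?_
            exact ENNReal.coe_le_coe.2 (hCf _)
    have hlim1 : Tendsto (fun N => A N f + (C : ℝ≥0∞) / N) u (nhds (limA f + 0)) :=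
      (htend f).add ((hCdiv C).mono_left hu_atTop)
    have hlim2 : Tendsto (fun N => A N F + (C : ℝ≥0∞) / N) u (nhds (limA F + 0)) :=
      (htend F).add ((hCdiv C).mono_left hu_atTop)
    refine le_antisymm ?_ ?_
    · have := le_of_tendsto_of_tendsto (htend F) hlim1
        (Filter.Eventually.of_forall hkey1)
      rwa [add_zero] at this
    · have := le_of_tendsto_of_tendsto (htend f) hlim2
        (Filter.Eventually.of_forall hkey2)
      rwa [add_zero] at this
  have hlow : (c : ℝ≥0∞) ≤ limA f₀ := ge_of_tendsto (htend f₀) hu_mem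
  -- the positive linear functional
  set Λ : (Y →ᵇ ℝ≥0) →ₗ[ℝ≥0] ℝ≥0 :=
    { toFun := fun f => (limA f).toNNReal
      map_add' := fun f g => by
        show (limA (f + g)).toNNReal = (limA f).toNNReal + (limA g).toNNReal
        rw [hadd]
        exact ENNReal.toNNReal_add (hfin f) (hfin g)
      map_smul' := fun r f => by
        show (limA (r • f)).toNNReal = (RingHom.id ℝ≥0) r • (limA f).toNNReal
        rw [hsmul, ENNReal.toNNReal_mul, ENNReal.toNNReal_coe]
        simp [smul_eq_mul] } with hΛ
  have hΛcoe : ∀ f, ((Λ f : ℝ≥0) : ℝ≥0∞) = limA f := fun f => ENNReal.coe_toNNReal (hfin f)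
  have hΛmono : ∀ f g : Y →ᵇ ℝ≥0, (∀ z, f z ≤ g z) → Λ f ≤ Λ g := by
    intro f g hfg
    rw [← ENNReal.coe_le_coe, hΛcoe, hΛcoe]
    exact hmono f g hfg
  have hΛone : Λ 1 = 1 := by
    have : ((Λ 1 : ℝ≥0) : ℝ≥0∞) = 1 := by rw [hΛcoe, hone]
    exact_mod_cast this
  have hΛinv : ∀ f : Y →ᵇ ℝ≥0, Λ (f.compContinuous ⟨S, hS⟩) = Λ f := by
    intro f
    have : ((Λ (f.compContinuous ⟨S, hS⟩) : ℝ≥0) : ℝ≥0∞) = ((Λ f : ℝ≥0) : ℝ≥0∞) := by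
      rw [hΛcoe, hΛcoe, hinvlim]
    exact_mod_cast this
  have hΛf₀ : c ≤ Λ f₀ := by
    have h : ((c : ℝ≥0) : ℝ≥0∞) ≤ ((Λ f₀ : ℝ≥0) : ℝ≥0∞) := by
      rw [hΛcoe]
      exact hlow
    exact_mod_cast h
  -- the Riesz content
  set Λc : CompactlySupportedContinuousMap Y ℝ≥0 →ₗ[ℝ≥0] ℝ≥0 :=
    Λ.comp
      ({ toFun := fun f => f.toBoundedContinuousFunction
         map_add' := fun f g => BoundedContinuousFunction.ext fun z => rfl
         map_smul' := fun r f => BoundedContinuousFunction.ext fun z => rfl } :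
        CompactlySupportedContinuousMap Y ℝ≥0 →ₗ[ℝ≥0] (Y →ᵇ ℝ≥0)) with hΛc
  have hdisj : ∀ K₁ K₂ : Compacts Y, Disjoint (K₁ : Set Y) K₂ → IsClosed (K₁ : Set Y) →
      IsClosed (K₂ : Set Y) → rieszContentAux Λc (K₁ ⊔ K₂) =
        rieszContentAux Λc K₁ + rieszContentAux Λc K₂ := by
    intro K₁ K₂ hd h1c h2c
    refine le_antisymm (rieszContentAux_sup_le Λc K₁ K₂) ?_
    refine le_csInf (rieszContentAux_image_nonempty Λc _) ?_
    rintro b ⟨f, hf, rfl⟩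
    obtain ⟨gc, hg0, hg1, hg01⟩ := exists_continuous_zero_one_of_isClosed h2c h1c hd.symm
    set G : Y →ᵇ ℝ≥0 := BoundedContinuousFunction.mkOfCompact
      ⟨fun z => Real.toNNReal (gc z), continuous_real_toNNReal.comp gc.continuous⟩ with hG
    set G' : Y →ᵇ ℝ≥0 := BoundedContinuousFunction.mkOfCompact
      ⟨fun z => Real.toNNReal (1 - gc z),
        continuous_real_toNNReal.comp (continuous_const.sub gc.continuous)⟩ with hG'
    set h₁ : Y →ᵇ ℝ≥0 := BoundedContinuousFunction.mkOfCompact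
      ⟨fun z => f z * G z, f.continuous.mul G.continuous⟩ with hh₁
    set h₂ : Y →ᵇ ℝ≥0 := BoundedContinuousFunction.mkOfCompact
      ⟨fun z => f z * G' z, f.continuous.mul G'.continuous⟩ with hh₂
    have hGsum : ∀ z, G z + G' z = 1 := by
      intro z
      have h0 : (0:ℝ) ≤ gc z := (hg01 z).1
      have h1 : gc z ≤ 1 := (hg01 z).2
      apply NNReal.coe_injective
      rw [hG, hG']
      push_cast
      simp only [BoundedContinuousFunction.mkOfCompact_apply, ContinuousMap.coe_mk]
      rw [Real.coe_toNNReal _ h0, Real.coe_toNNReal _ (by linarith)]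
      ring
    have hsplit : h₁ + h₂ = f.toBoundedContinuousFunction := by
      ext z
      rw [BoundedContinuousFunction.add_apply, hh₁, hh₂]
      simp only [BoundedContinuousFunction.mkOfCompact_apply, ContinuousMap.coe_mk,
        CompactlySupportedContinuousMap.toBoundedContinuousFunction_apply]
      rw [← mul_add, hGsum z, mul_one]
    have hk1 : ∀ x ∈ K₁, (1:ℝ≥0) ≤ h₁ x := by
      intro x hx
      have hGx : G x = 1 := by
        rw [hG]
        simp only [BoundedContinuousFunction.mkOfCompact_apply, ContinuousMap.coe_mk]
        rw [hg1 hx]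
        simp
      rw [hh₁]
      simp only [BoundedContinuousFunction.mkOfCompact_apply, ContinuousMap.coe_mk]
      rw [hGx, mul_one]
      exact hf x (Or.inl hx)
    have hk2 : ∀ x ∈ K₂, (1:ℝ≥0) ≤ h₂ x := by
      intro x hx
      have hGx : G' x = 1 := by
        rw [hG']
        simp only [BoundedContinuousFunction.mkOfCompact_apply, ContinuousMap.coe_mk]
        rw [hg0 hx]
        simp
      rw [hh₂]
      simp only [BoundedContinuousFunction.mkOfCompact_apply, ContinuousMap.coe_mk]
      rw [hGx, mul_one]
      exact hf x (Or.inr hx)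
    calc rieszContentAux Λc K₁ + rieszContentAux Λc K₂ ≤ Λ h₁ + Λ h₂ :=
          add_le_add (rieszContentAux_le Λc
            (f := CompactlySupportedContinuousMap.continuousMapEquiv h₁.toContinuousMap) hk1)
            (rieszContentAux_le Λc
            (f := CompactlySupportedContinuousMap.continuousMapEquiv h₂.toContinuousMap) hk2)
      _ = Λ f.toBoundedContinuousFunction := by rw [← map_add, hsplit]
  set 𝒞 : Content Y :=
    { toFun := rieszContentAux Λc
      mono' := fun K₁ K₂ h => rieszContentAux_mono Λc h
      sup_disjoint' := hdisj
      sup_le' := fun K₁ K₂ => rieszContentAux_sup_le Λc K₁ K₂ } with h𝒞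
  set μ : Measure Y := 𝒞.measure with hμdef
  have hμ1dim : rieszContentAux Λc ⟨univ, isCompact_univ⟩ = 1 := by
    refine le_antisymm ?_ ?_
    · have : rieszContentAux Λc ⟨univ, isCompact_univ⟩ ≤ Λ 1 := rieszContentAux_le Λc
        (K := ⟨univ, isCompact_univ⟩)
        (f := CompactlySupportedContinuousMap.continuousMapEquiv (1 : Y →ᵇ ℝ≥0).toContinuousMap)
        (fun x _ => le_refl 1)
      rwa [hΛone] at this
    · refine le_csInf (rieszContentAux_image_nonempty Λc _) ?_
      rintro b ⟨f, hf, rfl⟩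
      rw [← hΛone]
      refine hΛmono 1 f.toBoundedContinuousFunction fun z => ?_
      simpa using hf z (mem_univ z)
  have huniv : μ univ = 1 := by
    rw [hμdef, 𝒞.measure_apply MeasurableSet.univ,
      𝒞.outerMeasure_of_isOpen univ isOpen_univ,
      𝒞.innerContent_of_isCompact isCompact_univ isOpen_univ]
    show ((rieszContentAux Λc ⟨univ, isCompact_univ⟩ : ℝ≥0) : ℝ≥0∞) = 1
    rw [hμ1dim]
    simp
  have hprob : IsProbabilityMeasure μ := ⟨huniv⟩
  have hKpre : ∀ K : Compacts Y, IsCompact (S ⁻¹' (K : Set Y)) := fun K =>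
    (K.isCompact.isClosed.preimage hS).isCompact
  have hpre : ∀ K : Compacts Y,
      rieszContentAux Λc ⟨S ⁻¹' (K : Set Y), hKpre K⟩ ≤ rieszContentAux Λc K := by
    intro K
    refine le_csInf (rieszContentAux_image_nonempty Λc K) ?_
    rintro b ⟨f, hf, rfl⟩
    refine le_trans (rieszContentAux_le Λc (K := ⟨S ⁻¹' (K : Set Y), hKpre K⟩)
      (f := CompactlySupportedContinuousMap.continuousMapEquiv
        (f.toBoundedContinuousFunction.compContinuous ⟨S, hS⟩).toContinuousMap) ?_)
      (le_of_eq (hΛinv f.toBoundedContinuousFunction))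
    intro x hx
    show (1:ℝ≥0) ≤ f (S x)
    exact hf (S x) hx
  have hopenle : ∀ U : Set Y, IsOpen U → μ (S ⁻¹' U) ≤ μ U := by
    intro U hU
    rw [hμdef, 𝒞.measure_apply (hU.preimage hS).measurableSet,
      𝒞.measure_apply hU.measurableSet,
      𝒞.outerMeasure_of_isOpen _ (hU.preimage hS),
      𝒞.outerMeasure_of_isOpen _ hU]
    refine iSup₂_le fun K hK => ?_
    have hs1 : (K : Set Y) ⊆ S ⁻¹' (S '' (K : Set Y)) := subset_preimage_image S _
    have himg : IsCompact (S '' (K : Set Y)) := K.isCompact.image hS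
    calc (𝒞 K : ℝ≥0∞) ≤ 𝒞 ⟨S ⁻¹' (S '' (K : Set Y)), hKpre ⟨_, himg⟩⟩ :=
          ENNReal.coe_le_coe.2 (rieszContentAux_mono Λc hs1)
      _ ≤ 𝒞 ⟨S '' (K : Set Y), himg⟩ := ENNReal.coe_le_coe.2 (hpre ⟨_, himg⟩)
      _ ≤ 𝒞.innerContent ⟨U, hU⟩ :=
          𝒞.le_innerContent _ _ (image_subset_iff.2 hK)
  have hle : ∀ B : Set Y, MeasurableSet B → μ (S ⁻¹' B) ≤ μ B := by
    intro B hB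
    haveI : IsProbabilityMeasure μ := hprob
    haveI : IsProbabilityMeasure (μ.map S) :=
      Measure.isProbabilityMeasure_map hS.measurable.aemeasurable
    rw [← Measure.map_apply hS.measurable hB]
    rw [Set.measure_eq_iInf_isOpen B (μ.map S), Set.measure_eq_iInf_isOpen B μ]
    refine le_iInf fun U => le_iInf fun hBU => le_iInf fun hUo => ?_
    refine iInf_le_of_le U (iInf_le_of_le hBU (iInf_le_of_le hUo ?_))
    rw [Measure.map_apply hS.measurable hUo.measurableSet]
    exact hopenle U hUo
  have hinvμ : ∀ B : Set Y, MeasurableSet B → μ (S ⁻¹' B) = μ B := by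
    intro B hB
    haveI : IsProbabilityMeasure μ := hprob
    refine le_antisymm (hle B hB) ?_
    have hc1 := hle Bᶜ hB.compl
    rw [preimage_compl] at hc1
    have hB1 : μ B + μ Bᶜ = 1 := by
      rw [measure_add_measure_compl hB, measure_univ]
    have hS1 : μ (S ⁻¹' B) + μ (S ⁻¹' B)ᶜ = 1 := by
      rw [measure_add_measure_compl (hB.preimage hS.measurable), measure_univ]
    have hsum : μ B + μ (S ⁻¹' B)ᶜ ≤ μ (S ⁻¹' B) + μ (S ⁻¹' B)ᶜ := by
      calc μ B + μ (S ⁻¹' B)ᶜ ≤ μ B + μ Bᶜ := add_le_add le_rfl hc1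
        _ = 1 := hB1
        _ = μ (S ⁻¹' B) + μ (S ⁻¹' B)ᶜ := hS1.symm
    exact (ENNReal.add_le_add_iff_right (measure_ne_top μ _)).1 hsum
  -- positive mass on `{c/2 ≤ f₀}`
  have hK₀c : IsCompact {z : Y | c / 2 ≤ f₀ z} :=
    (isClosed_le continuous_const f₀.continuous).isCompact
  set K₀ : Compacts Y := ⟨{z : Y | c / 2 ≤ f₀ z}, hK₀c⟩ with hK₀
  refine ⟨μ, hprob, hinvμ, ?_⟩
  intro h0
  have hK₀0 : rieszContentAux Λc K₀ = 0 := by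
    have hmK : MeasurableSet (K₀ : Set Y) := hK₀c.isClosed.measurableSet
    have h0' : μ (K₀ : Set Y) = 0 := h0
    have h1 := 𝒞.le_outerMeasure_compacts K₀
    rw [← 𝒞.measure_apply hmK, ← hμdef, h0'] at h1
    exact_mod_cast (show ((rieszContentAux Λc K₀ : ℝ≥0) : ℝ≥0∞) = 0 from
      le_antisymm h1 (zero_le))
  obtain ⟨Cf, hCf, -⟩ := hbound f₀
  have hεpos : 0 < c / (4 * (Cf + 1)) :=
    pos_iff_ne_zero.2 (div_ne_zero hc.ne'
      (ne_of_gt (by positivity : (0:ℝ≥0) < 4 * (Cf + 1))))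
  obtain ⟨f, hf1, hfΛ⟩ := exists_lt_rieszContentAux_add_pos Λc K₀ hεpos
  rw [hK₀0, zero_add] at hfΛ
  have hpt : ∀ z, f₀ z ≤ ((c / 2) • (1 : Y →ᵇ ℝ≥0) + Cf • f.toBoundedContinuousFunction) z := by
    intro z
    rw [BoundedContinuousFunction.add_apply, BoundedContinuousFunction.smul_apply,
      BoundedContinuousFunction.smul_apply]
    simp only [BoundedContinuousFunction.coe_one, Pi.one_apply, smul_eq_mul, mul_one,
      CompactlySupportedContinuousMap.toBoundedContinuousFunction_apply]
    by_cases hz : c / 2 ≤ f₀ z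
    · have h1f : (1:ℝ≥0) ≤ f z := hf1 z hz
      calc f₀ z ≤ Cf := hCf z
        _ ≤ Cf * f z := le_mul_of_one_le_right (zero_le) h1f
        _ ≤ c / 2 + Cf * f z := le_add_self
    · exact le_trans (le_of_not_ge hz) le_self_add
  have hΛle : Λ f₀ ≤ c / 2 + Cf * Λ f.toBoundedContinuousFunction := by
    have h1 := hΛmono _ _ hpt
    rwa [map_add, LinearMap.map_smul, LinearMap.map_smul, hΛone, smul_eq_mul, mul_one,
      smul_eq_mul] at h1
  -- contradiction in ℝ
  have hc' : (0:ℝ) < c := hc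
  have h1 : (c:ℝ) ≤ (Λ f₀ : ℝ≥0) := by exact_mod_cast hΛf₀
  have h2 : ((Λ f₀ : ℝ≥0) : ℝ) ≤ (c:ℝ) / 2 + Cf * (Λ f.toBoundedContinuousFunction : ℝ≥0) := by
    have := hΛle
    push_cast [NNReal.coe_add, NNReal.coe_mul, NNReal.coe_div] at *
    exact_mod_cast this
  have h3 : ((Λ f.toBoundedContinuousFunction : ℝ≥0) : ℝ) < (c:ℝ) / (4 * ((Cf:ℝ) + 1)) := by
    have : Λ f.toBoundedContinuousFunction < c / (4 * (Cf + 1)) := hfΛ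
    push_cast at *
    exact_mod_cast this
  have hCf0 : (0:ℝ) ≤ Cf := Cf.coe_nonneg
  have h4 : (Cf:ℝ) * (Λ f.toBoundedContinuousFunction : ℝ≥0) ≤ (Cf:ℝ) * ((c:ℝ) / (4 * ((Cf:ℝ) + 1))) :=
    mul_le_mul_of_nonneg_left h3.le hCf0
  have h5 : (Cf:ℝ) * ((c:ℝ) / (4 * ((Cf:ℝ) + 1))) ≤ (c:ℝ) / 4 := by
    rw [mul_div_assoc']
    rw [div_le_div_iff₀ (by positivity) (by norm_num)]
    nlinarith
  linarith

end KB


/-- (3) → (1) via the Krylov–Bogolyubov construction. -/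
lemma mp_of_diag {X : Type*} [MetricSpace X] [CompactSpace X] [Nonempty X]
    [MeasurableSpace X] [BorelSpace X] (T : X → X) (hT : Continuous T)
    (h3 : ∀ ν : Measure (X × X), IsProbabilityMeasure ν →
      (∀ B : Set (X × X), MeasurableSet B → ν (Prod.map T T ⁻¹' B) = ν B) →
      ν (Set.diagonal X) = 1)
    (x y : X) : MeanProximalPair T x y := by
  obtain ⟨C, hC⟩ : ∃ C, ∀ a b : X, dist a b ≤ C := by
    obtain ⟨C, hC⟩ := Metric.isBounded_iff.1 (isCompact_univ (X := X)).isBounded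
    exact ⟨C, fun a b => hC (mem_univ a) (mem_univ b)⟩
  have hC0 : 0 ≤ C := le_trans dist_nonneg (hC x x)
  have hbddle : IsBoundedUnder (· ≤ ·) atTop (birkhoffAvg T x y) :=
    isBoundedUnder_of ⟨C, fun N => birkhoffAvg_le_of_dist_le T hC hC0 x y N⟩
  have hbddge : IsBoundedUnder (· ≥ ·) atTop (birkhoffAvg T x y) :=
    isBoundedUnder_of ⟨0, fun N => birkhoffAvg_nonneg T x y N⟩
  set l := liminf (birkhoffAvg T x y) atTop with hl
  have h0le : 0 ≤ l := le_liminf_of_le hbddle.isCoboundedUnder_ge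
    (Filter.Eventually.of_forall fun N => birkhoffAvg_nonneg T x y N)
  unfold MeanProximalPair
  by_contra hne
  have hlpos : 0 < l := lt_of_le_of_ne h0le (Ne.symm hne)
  have hev : ∀ᶠ N in atTop, l / 2 < birkhoffAvg T x y N :=
    eventually_lt_of_lt_liminf (by rw [← hl]; linarith) hbddge
  set c : ℝ≥0 := Real.toNNReal (l / 2) with hcdef
  have hc : 0 < c := Real.toNNReal_pos.2 (by linarith)
  set f₀ : (X × X) →ᵇ ℝ≥0 := BoundedContinuousFunction.mkOfCompact
    ⟨fun p => nndist p.1 p.2, continuous_nndist⟩ with hf₀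
  have hfreq : ∃ᶠ N in atTop, (c : ℝ≥0∞) ≤
      (∑ k ∈ Finset.range N, (f₀ ((Prod.map T T)^[k] (x, y)) : ℝ≥0∞)) / N := by
    refine ((hev.and (eventually_ge_atTop 1)).mono ?_).frequently
    rintro N ⟨hNl, hN1⟩
    have hNpos : (0:ℝ) < N := by exact_mod_cast hN1
    have heq : (∑ k ∈ Finset.range N, (f₀ ((Prod.map T T)^[k] (x, y)) : ℝ≥0∞)) / N
        = ENNReal.ofReal (birkhoffAvg T x y N) := by
      unfold birkhoffAvg
      rw [ENNReal.ofReal_div_of_pos hNpos,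
        ENNReal.ofReal_sum_of_nonneg (fun k _ => dist_nonneg), ENNReal.ofReal_natCast]
      congr 1
      refine Finset.sum_congr rfl fun k _ => ?_
      rw [hf₀, BoundedContinuousFunction.mkOfCompact_apply, prodMap_iterate]
      simp only [ContinuousMap.coe_mk]
      rw [← edist_nndist, edist_dist]
    rw [heq]
    have : (c : ℝ≥0∞) = ENNReal.ofReal (l / 2) := by
      rw [hcdef, ENNReal.ofReal]
    rw [this]
    exact ENNReal.ofReal_le_ofReal hNl.le
  obtain ⟨ν, hprob, hinv, hpos⟩ := exists_invariant_of_freq (Prod.map T T)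
    (hT.prodMap hT) (x, y) f₀ c hc hfreq
  have hdiag := h3 ν hprob hinv
  have hcomp : ν (Set.diagonal X)ᶜ = 0 := by
    rw [measure_compl (isClosed_diagonal.measurableSet) (measure_ne_top ν _), hdiag,
      measure_univ, tsub_self]
  have hsub : {p : X × X | c / 2 ≤ f₀ p} ⊆ (Set.diagonal X)ᶜ := by
    intro p hp hdg
    rw [Set.mem_diagonal_iff] at hdg
    have : f₀ p = 0 := by
      rw [hf₀, BoundedContinuousFunction.mkOfCompact_apply]
      simp only [ContinuousMap.coe_mk]
      rw [hdg]
      simp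
    rw [mem_setOf_eq, this, le_zero_iff] at hp
    exact (div_ne_zero hc.ne' two_ne_zero) hp
  exact hpos (le_antisymm ((measure_mono hsub).trans hcomp.le) (zero_le))

/-- Characterizations of mean proximal systems: mean proximality, mean asymptoticity,
all invariant measures of the product supported on the diagonal, unique ergodicity
with a Dirac measure at a fixed point, and mean proximality of the product system
are all equivalent. -/
theorem meanProximal_tfae
    {X : Type*} [MetricSpace X] [CompactSpace X] [Nonempty X]
    [MeasurableSpace X] [BorelSpace X]
    (T : X → X) (hT : Continuous T) :
    List.TFAE
      [ ∀ x y : X, MeanProximalPair T x y,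
        ∀ x y : X, Tendsto (birkhoffAvg T x y) atTop (nhds 0),
        ∀ ν : Measure (X × X), IsProbabilityMeasure ν →
          (∀ B : Set (X × X), MeasurableSet B → ν (Prod.map T T ⁻¹' B) = ν B) →
          ν (Set.diagonal X) = 1,
        ∃ x₀ : X, T x₀ = x₀ ∧
          (∀ B : Set X, MeasurableSet B →
            Measure.dirac x₀ (T ⁻¹' B) = Measure.dirac x₀ B) ∧
          (∀ μ : Measure X, IsProbabilityMeasure μ →
            (∀ B : Set X, MeasurableSet B → μ (T ⁻¹' B) = μ B) →
            μ = Measure.dirac x₀),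
        ∀ u v : X × X, MeanProximalPair (Prod.map T T) u v ] := by
  tfae_have 1 → 2 := fun h1 x y => tendsto_birkhoff_of_mp T hT h1 x y
  tfae_have 2 → 5 := fun h2 u v => (prod_tendsto_of_tendsto T h2 u v).liminf_eq
  tfae_have 5 → 1 := fun h5 => mp_of_prod_mp T h5
  tfae_have 2 → 4 := by
    intro h2
    obtain ⟨x₀, hfix⟩ := exists_fixedPt T hT h2
    refine ⟨x₀, hfix, ?_, ?_⟩
    · intro B hB
      rw [Measure.dirac_apply' _ (hT.measurable hB), Measure.dirac_apply' _ hB]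
      by_cases hmem : x₀ ∈ B
      · rw [indicator_of_mem (show x₀ ∈ T ⁻¹' B by rw [mem_preimage, hfix]; exact hmem),
          indicator_of_mem hmem]
      · rw [indicator_of_notMem (show x₀ ∉ T ⁻¹' B by rw [mem_preimage, hfix]; exact hmem),
          indicator_of_notMem hmem]
    · exact fun μ hμ hinv => invariant_eq_dirac T hT hfix h2 μ hμ hinv
  tfae_have 4 → 3 := by
    rintro ⟨x₀, hfix, hdirac, huniq⟩
    exact fun ν hν hinv => diag_of_unique T hT x₀ huniq ν hν hinv
  tfae_have 3 → 1 := fun h3 x y => mp_of_diag T hT h3 x y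
  tfae_finish
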